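/- Robustness of the mediation estimating functional under submodel M_b (correct outcome regression and correct exposure model, arbitrary mediator density): if b̂(m,x) = E(Y|E=1,M=m,X=x) and f̂_E(x) = P(E=1|X=x) for all m ∈ 𝒮 and x with P(X=x) > 0, then for every f̂_M : 𝒮×{0,1}×𝒳 → (0,1) with Σ_m f̂_M(m|e,x) = 1 for each (e,x), T(b̂, f̂_M, f̂_E) = θ0. -/

import Mathlib

open MeasureTheory ProbabilityTheory

/-- Conditional probability of `B` given the event `A`: `P(B ∩ A) / P(A)`. -/
noncomputable def cP {Ω : Type*} [MeasurableSpace Ω] (μ : Measure Ω) (B A : Set Ω) : ℝ :=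
  (μ (B ∩ A)).toReal / (μ A).toReal

/-- Conditional expectation of `Y` given the event `A`: `E[Y·1_A] / P(A)`. -/
noncomputable def cE {Ω : Type*} [MeasurableSpace Ω] (μ : Measure Ω) (Y : Ω → ℝ) (A : Set Ω) : ℝ :=
  (∫ ω in A, Y ω ∂μ) / (μ A).toReal

open Classical in
/-- The mediation functional
`θ0 = Σ_{m, x : P(X=x)>0} E(Y | E=1, M=m, X=x) · P(M=m | E=0, X=x) · P(X=x)`. -/
noncomputable def theta0 {Ω 𝒳 𝒮 : Type*} [MeasurableSpace Ω] [Fintype 𝒳] [Fintype 𝒮]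
    (μ : Measure Ω) (X : Ω → 𝒳) (M : Ω → 𝒮) (E : Ω → Bool) (Y : Ω → ℝ) : ℝ :=
  ∑ m : 𝒮, ∑ x ∈ Finset.univ.filter (fun x => μ (X ⁻¹' {x}) ≠ 0),
    cE μ Y (E ⁻¹' {true} ∩ M ⁻¹' {m} ∩ X ⁻¹' {x}) *
      cP μ (M ⁻¹' {m}) (E ⁻¹' {false} ∩ X ⁻¹' {x}) *
      (μ (X ⁻¹' {x})).toReal

lemma fiber_sum {Ω ι : Type*} [MeasurableSpace Ω] [Fintype ι] [MeasurableSpace ι]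
    [MeasurableSingletonClass ι] {g : Ω → ι} (hg : Measurable g)
    (μ : Measure Ω) {A : Set Ω} (hA : MeasurableSet A) :
    ∑ i : ι, μ (g ⁻¹' {i} ∩ A) = μ A := by
  classical
  rw [← measure_biUnion_finset ?_ ?_]
  · congr 1; ext ω; simp
  · intro i _ j _ hij
    refine Set.disjoint_left.2 fun ω hi hj => hij ?_
    have h1 : g ω = i := hi.1
    have h2 : g ω = j := hj.1
    rw [← h1, h2]
  · intro i _; exact (hg (measurableSet_singleton i)).inter hA

lemma fiber_sum_toReal {Ω ι : Type*} [MeasurableSpace Ω] [Fintype ι] [MeasurableSpace ι]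
    [MeasurableSingletonClass ι] {g : Ω → ι} (hg : Measurable g)
    (μ : Measure Ω) [IsFiniteMeasure μ] {A : Set Ω} (hA : MeasurableSet A) :
    ∑ i : ι, (μ (g ⁻¹' {i} ∩ A)).toReal = (μ A).toReal := by
  rw [← ENNReal.toReal_sum (fun i _ => measure_ne_top μ _), fiber_sum hg μ hA]

lemma integral_affine_fiber {Ω ι : Type*} [MeasurableSpace Ω] [Fintype ι] [MeasurableSpace ι]
    [MeasurableSingletonClass ι] {g : Ω → ι} (hg : Measurable g)
    (μ : Measure Ω) [IsFiniteMeasure μ] {Y : Ω → ℝ} (hY : Integrable Y μ)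
    (c d : ι → ℝ) :
    ∫ ω, (c (g ω) * Y ω + d (g ω)) ∂μ
      = ∑ i : ι, (c i * ∫ ω in g ⁻¹' {i}, Y ω ∂μ + d i * (μ (g ⁻¹' {i})).toReal) := by
  classical
  have hpt : ∀ ω, c (g ω) * Y ω + d (g ω)
      = ∑ i : ι, Set.indicator (g ⁻¹' {i}) (fun ω' => c i * Y ω' + d i) ω := by
    intro ω
    rw [Fintype.sum_eq_single (g ω) (fun i hi => by
      simp [Set.indicator_apply, Set.mem_preimage, Set.mem_singleton_iff, Ne.symm hi])]
    simp [Set.indicator_apply]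
  calc ∫ ω, (c (g ω) * Y ω + d (g ω)) ∂μ
      = ∫ ω, ∑ i : ι, Set.indicator (g ⁻¹' {i}) (fun ω' => c i * Y ω' + d i) ω ∂μ := by
        simp_rw [hpt]
    _ = ∑ i : ι, ∫ ω, Set.indicator (g ⁻¹' {i}) (fun ω' => c i * Y ω' + d i) ω ∂μ := by
        refine integral_finset_sum _ fun i _ => ?_
        exact ((hY.const_mul (c i)).add (integrable_const (d i))).indicator
          (hg (measurableSet_singleton i))
    _ = ∑ i : ι, (c i * ∫ ω in g ⁻¹' {i}, Y ω ∂μ + d i * (μ (g ⁻¹' {i})).toReal) := by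
        refine Finset.sum_congr rfl fun i _ => ?_
        rw [integral_indicator (hg (measurableSet_singleton i)),
          integral_add (hY.integrableOn.const_mul _)
            (integrableOn_const (measure_ne_top _ _)),
          integral_const_mul, setIntegral_const, smul_eq_mul, measureReal_def]; ring

/-- robustness of the mediation estimating functional under submodel
M_b: if the outcome regression and the exposure model are correct, then for every
mediator working density, `T(b̂, f̂_M, f̂_E) = θ0`. -/
theorem robust_Mb
    {Ω 𝒳 𝒮 : Type*} [MeasurableSpace Ω] [Fintype 𝒳] [Fintype 𝒮]
    [MeasurableSpace 𝒳] [MeasurableSingletonClass 𝒳]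
    [MeasurableSpace 𝒮] [MeasurableSingletonClass 𝒮]
    (μ : Measure Ω) [IsProbabilityMeasure μ]
    (X : Ω → 𝒳) (M : Ω → 𝒮) (E : Ω → Bool) (Y : Ω → ℝ)
    (hX : Measurable X) (hM : Measurable M) (hE : Measurable E)
    (hY : Integrable Y μ)
    (hposE : ∀ (e : Bool) (x : 𝒳), μ (X ⁻¹' {x}) ≠ 0 → μ (E ⁻¹' {e} ∩ X ⁻¹' {x}) ≠ 0)
    (hposM : ∀ (m : 𝒮) (e : Bool) (x : 𝒳), μ (X ⁻¹' {x}) ≠ 0 →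
      μ (M ⁻¹' {m} ∩ E ⁻¹' {e} ∩ X ⁻¹' {x}) ≠ 0)
    -- working models
    (bhat : 𝒮 → 𝒳 → ℝ) (fMhat : 𝒮 → Bool → 𝒳 → ℝ) (fEhat : 𝒳 → ℝ)
    (hfM01 : ∀ m e x, fMhat m e x ∈ Set.Ioo (0:ℝ) 1)
    (hfMsum : ∀ (e : Bool) (x : 𝒳), ∑ m : 𝒮, fMhat m e x = 1)
    (hfE01 : ∀ x, fEhat x ∈ Set.Ioo (0:ℝ) 1)
    (etahat : 𝒳 → ℝ)
    (hetahat : ∀ x, etahat x = ∑ m : 𝒮, bhat m x * fMhat m false x)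
    -- submodel M_b: correct outcome regression and correct exposure model
    (hb : ∀ (m : 𝒮) (x : 𝒳), μ (X ⁻¹' {x}) ≠ 0 →
      bhat m x = cE μ Y (E ⁻¹' {true} ∩ M ⁻¹' {m} ∩ X ⁻¹' {x}))
    (hfE : ∀ x : 𝒳, μ (X ⁻¹' {x}) ≠ 0 → fEhat x = cP μ (E ⁻¹' {true}) (X ⁻¹' {x})) :
    ∫ ω,
        ((if E ω then (1:ℝ) else 0) * fMhat (M ω) false (X ω) * (Y ω - bhat (M ω) (X ω)) /
            (fEhat (X ω) * fMhat (M ω) true (X ω)) +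
          (if E ω then (0:ℝ) else 1) / (1 - fEhat (X ω)) *
            (bhat (M ω) (X ω) - etahat (X ω)) +
          etahat (X ω)) ∂μ = theta0 μ X M E Y := by
  classical
  set c : Bool × 𝒮 × 𝒳 → ℝ := fun z =>
    (if z.1 then (1:ℝ) else 0) * fMhat z.2.1 false z.2.2 /
      (fEhat z.2.2 * fMhat z.2.1 true z.2.2) with hcdef
  set d : Bool × 𝒮 × 𝒳 → ℝ := fun z =>
    (if z.1 then (1:ℝ) else 0) * fMhat z.2.1 false z.2.2 * (0 - bhat z.2.1 z.2.2) /
      (fEhat z.2.2 * fMhat z.2.1 true z.2.2) +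
    (if z.1 then (0:ℝ) else 1) / (1 - fEhat z.2.2) * (bhat z.2.1 z.2.2 - etahat z.2.2) +
    etahat z.2.2 with hddef
  have hg : Measurable (fun ω => (E ω, M ω, X ω) : Ω → Bool × 𝒮 × 𝒳) :=
    hE.prodMk (hM.prodMk hX)
  have hfib : ∀ (e : Bool) (m : 𝒮) (x : 𝒳),
      (fun ω => (E ω, M ω, X ω)) ⁻¹' {(e, m, x)} = E ⁻¹' {e} ∩ M ⁻¹' {m} ∩ X ⁻¹' {x} := by
    intro e m x
    ext ω
    simp [Prod.ext_iff, and_assoc]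
  have step1 : ∫ ω,
        ((if E ω then (1:ℝ) else 0) * fMhat (M ω) false (X ω) * (Y ω - bhat (M ω) (X ω)) /
            (fEhat (X ω) * fMhat (M ω) true (X ω)) +
          (if E ω then (0:ℝ) else 1) / (1 - fEhat (X ω)) *
            (bhat (M ω) (X ω) - etahat (X ω)) +
          etahat (X ω)) ∂μ
      = ∑ z : Bool × 𝒮 × 𝒳,
          (c z * ∫ ω in (fun ω => (E ω, M ω, X ω)) ⁻¹' {z}, Y ω ∂μ +
            d z * (μ ((fun ω => (E ω, M ω, X ω)) ⁻¹' {z})).toReal) := by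
    rw [← integral_affine_fiber hg μ hY c d]
    congr 1
    funext ω
    cases hEe : E ω <;> simp [hcdef, hddef] <;> ring
  rw [step1]
  have hreorg : ∀ f : Bool × 𝒮 × 𝒳 → ℝ,
      ∑ z : Bool × 𝒮 × 𝒳, f z = ∑ x : 𝒳, ∑ m : 𝒮, (f (true, m, x) + f (false, m, x)) := by
    intro f
    rw [Fintype.sum_prod_type, Fintype.sum_bool, ← Finset.sum_add_distrib,
      Fintype.sum_prod_type]
    exact Finset.sum_comm
  rw [hreorg]
  simp only [hfib]
  rw [theta0]
  conv_rhs => rw [Finset.sum_comm]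
  rw [← Finset.sum_filter_of_ne (p := fun x => μ (X ⁻¹' {x}) ≠ 0) ?hz]
  case hz =>
    intro x _ hne
    by_contra h0
    apply hne
    refine Finset.sum_eq_zero fun m _ => ?_
    have hz : ∀ e : Bool, μ (E ⁻¹' {e} ∩ M ⁻¹' {m} ∩ X ⁻¹' {x}) = 0 := fun e =>
      measure_mono_null Set.inter_subset_right h0
    have hi : ∀ e : Bool, (∫ ω in E ⁻¹' {e} ∩ M ⁻¹' {m} ∩ X ⁻¹' {x}, Y ω ∂μ) = 0 := fun e => by
      rw [Measure.restrict_eq_zero.mpr (hz e), integral_zero_measure]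
    rw [hi true, hi false, hz true, hz false]
    simp
  refine Finset.sum_congr rfl fun x hx => ?_
  rw [Finset.mem_filter] at hx
  have hx := hx.2
  -- notation for this x
  have hswap : ∀ (e : Bool) (m : 𝒮),
      E ⁻¹' {e} ∩ M ⁻¹' {m} ∩ X ⁻¹' {x} = M ⁻¹' {m} ∩ (E ⁻¹' {e} ∩ X ⁻¹' {x}) := by
    intro e m; ext ω; simp [Set.mem_inter_iff]; tauto
  have hswap2 : ∀ (e : Bool) (m : 𝒮),
      M ⁻¹' {m} ∩ E ⁻¹' {e} ∩ X ⁻¹' {x} = E ⁻¹' {e} ∩ M ⁻¹' {m} ∩ X ⁻¹' {x} := by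
    intro e m; ext ω; simp [Set.mem_inter_iff]; tauto
  set pXr := (μ (X ⁻¹' {x})).toReal with hpXrdef
  set pEt := (μ (E ⁻¹' {true} ∩ X ⁻¹' {x})).toReal with hpEtdef
  set pEf := (μ (E ⁻¹' {false} ∩ X ⁻¹' {x})).toReal with hpEfdef
  have hpXr : pXr ≠ 0 := ENNReal.toReal_ne_zero.2 ⟨hx, measure_ne_top μ _⟩
  have hpEf : pEf ≠ 0 := ENNReal.toReal_ne_zero.2 ⟨hposE false x hx, measure_ne_top μ _⟩
  have hEtEf : pEt + pEf = pXr := by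
    have := fiber_sum_toReal hE μ (hX (measurableSet_singleton x) : MeasurableSet (X ⁻¹' {x}))
    rw [Fintype.sum_bool] at this
    exact this
  have hfEx : fEhat x = pEt / pXr := by rw [hfE x hx, cP]
  have h1mfE : 1 - fEhat x = pEf / pXr := by
    rw [hfEx]; field_simp; linarith [hEtEf]
  -- per-m measures
  have hpt : ∀ m : 𝒮, (μ (E ⁻¹' {true} ∩ M ⁻¹' {m} ∩ X ⁻¹' {x})).toReal ≠ 0 := by
    intro m
    rw [← hswap2 true m]
    exact ENNReal.toReal_ne_zero.2 ⟨hposM m true x hx, measure_ne_top μ _⟩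
  have hIt : ∀ m : 𝒮, (∫ ω in E ⁻¹' {true} ∩ M ⁻¹' {m} ∩ X ⁻¹' {x}, Y ω ∂μ)
      = bhat m x * (μ (E ⁻¹' {true} ∩ M ⁻¹' {m} ∩ X ⁻¹' {x})).toReal := by
    intro m
    have h := (hb m x hx).symm
    rw [cE, div_eq_iff (hpt m)] at h
    exact h
  have hsumpt : ∑ m : 𝒮, (μ (E ⁻¹' {true} ∩ M ⁻¹' {m} ∩ X ⁻¹' {x})).toReal = pEt := by
    simp_rw [hswap true]
    exact fiber_sum_toReal hM μ ((hE (measurableSet_singleton true)).inter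
      (hX (measurableSet_singleton x)))
  have hsumpf : ∑ m : 𝒮, (μ (E ⁻¹' {false} ∩ M ⁻¹' {m} ∩ X ⁻¹' {x})).toReal = pEf := by
    simp_rw [hswap false]
    exact fiber_sum_toReal hM μ ((hE (measurableSet_singleton false)).inter
      (hX (measurableSet_singleton x)))
  -- clean forms of c and d
  have hct : ∀ m : 𝒮, c (true, m, x) = fMhat m false x / (fEhat x * fMhat m true x) := by
    intro m; simp [hcdef]
  have hcf : ∀ m : 𝒮, c (false, m, x) = 0 := by intro m; simp [hcdef]
  have hdt : ∀ m : 𝒮, d (true, m, x)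
      = fMhat m false x * (0 - bhat m x) / (fEhat x * fMhat m true x) + etahat x := by
    intro m; simp [hddef]
  have hdf : ∀ m : 𝒮, d (false, m, x)
      = (bhat m x - etahat x) / (1 - fEhat x) + etahat x := by
    intro m; simp [hddef]; ring
  -- rewrite LHS per-m into canonical form
  have hLHS : ∀ m : 𝒮,
      (c (true, m, x) * ∫ ω in E ⁻¹' {true} ∩ M ⁻¹' {m} ∩ X ⁻¹' {x}, Y ω ∂μ +
        d (true, m, x) * (μ (E ⁻¹' {true} ∩ M ⁻¹' {m} ∩ X ⁻¹' {x})).toReal) +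
      (c (false, m, x) * ∫ ω in E ⁻¹' {false} ∩ M ⁻¹' {m} ∩ X ⁻¹' {x}, Y ω ∂μ +
        d (false, m, x) * (μ (E ⁻¹' {false} ∩ M ⁻¹' {m} ∩ X ⁻¹' {x})).toReal)
      = (μ (E ⁻¹' {true} ∩ M ⁻¹' {m} ∩ X ⁻¹' {x})).toReal * etahat x +
        (μ (E ⁻¹' {false} ∩ M ⁻¹' {m} ∩ X ⁻¹' {x})).toReal * etahat x +
        (bhat m x * (μ (E ⁻¹' {false} ∩ M ⁻¹' {m} ∩ X ⁻¹' {x})).toReal) * (pXr / pEf) -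
        (μ (E ⁻¹' {false} ∩ M ⁻¹' {m} ∩ X ⁻¹' {x})).toReal * (etahat x * pXr / pEf) := by
    intro m
    rw [hct m, hcf m, hdt m, hdf m, hIt m, h1mfE]
    have hfMne : fMhat m true x ≠ 0 := (hfM01 m true x).1.ne'
    have hfEne : fEhat x ≠ 0 := (hfE01 x).1.ne'
    field_simp
    ring
  -- rewrite RHS per-m
  have hRHS : ∀ m : 𝒮,
      cE μ Y (E ⁻¹' {true} ∩ M ⁻¹' {m} ∩ X ⁻¹' {x}) *
        cP μ (M ⁻¹' {m}) (E ⁻¹' {false} ∩ X ⁻¹' {x}) * pXr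
      = (bhat m x * (μ (E ⁻¹' {false} ∩ M ⁻¹' {m} ∩ X ⁻¹' {x})).toReal) * (pXr / pEf) := by
    intro m
    rw [← hb m x hx, cP, ← hswap false m]
    ring
  simp_rw [hLHS, hRHS]
  rw [Finset.sum_sub_distrib, Finset.sum_add_distrib, Finset.sum_add_distrib,
    ← Finset.sum_mul, ← Finset.sum_mul, ← Finset.sum_mul, ← Finset.sum_mul,
    hsumpt, hsumpf]
  have : pEf * (etahat x * pXr / pEf) = etahat x * pXr := by field_simp
  rw [this, ← hEtEf]
  ring
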